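/- Let I_P be finite, p_i ∈ [0,1) for i ∈ I_P, and let Φ̂(y) = 1 - ∏_{i∈I_P}(1-p_i)^{y_i} defined for y ∈ ℝ_{≥0}^{I_P}. For any y* ∈ ℤ_{≥0}^{I_P}, define c(y*) = 1 - ∏_{i∈I_P}(1-p_i)^{y*_i} + (∏_{ℓ∈I_P}(1-p_ℓ)^{y*_ℓ}) · ∑_{i∈I_P} ln(1-p_i) · y*_i. Then 0 ≤ c(y*) ≤ 1. -/

import Mathlib

open Finset

theorem stmt7 {I : Type*} [Fintype I] (p : I → ℝ)
    (hp : ∀ i, 0 ≤ p i ∧ p i < 1) (ys : I → ℕ) :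
    0 ≤ 1 - (∏ i, (1 - p i) ^ (ys i)) +
        (∏ i, (1 - p i) ^ (ys i)) * ∑ i, Real.log (1 - p i) * (ys i : ℝ) ∧
    1 - (∏ i, (1 - p i) ^ (ys i)) +
        (∏ i, (1 - p i) ^ (ys i)) * ∑ i, Real.log (1 - p i) * (ys i : ℝ) ≤ 1 := by
  set P : ℝ := ∏ i, (1 - p i) ^ (ys i) with hPdef
  have hfac : ∀ i, 0 < 1 - p i := fun i => by linarith [(hp i).2]
  have hPpos : 0 < P := Finset.prod_pos fun i _ => pow_pos (hfac i) _
  have hPle1 : P ≤ 1 := by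
    apply Finset.prod_le_one (fun i _ => (pow_pos (hfac i) _).le)
    intro i _
    exact pow_le_one₀ (hfac i).le (by linarith [(hp i).1])
  have hS : (∑ i, Real.log (1 - p i) * (ys i : ℝ)) = Real.log P := by
    rw [hPdef, Real.log_prod (fun i _ => (pow_pos (hfac i) _).ne')]
    exact Finset.sum_congr rfl fun i _ => by
      rw [Real.log_pow]; ring
  rw [hS]
  have hlogP : Real.log P ≤ 0 := Real.log_nonpos hPpos.le hPle1
  constructor
  · -- need P - P*log P ≤ 1, i.e. -log P ≤ 1/P - 1
    have h := Real.log_le_sub_one_of_pos (show (0:ℝ) < P⁻¹ from inv_pos.mpr hPpos)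
    rw [Real.log_inv] at h
    -- -log P ≤ P⁻¹ - 1
    have h2 : P * (-Real.log P) ≤ P * (P⁻¹ - 1) := by
      exact mul_le_mul_of_nonneg_left h hPpos.le
    rw [mul_sub, mul_inv_cancel₀ hPpos.ne'] at h2
    nlinarith
  · nlinarith
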